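/- Suppose a group Γ acts harmonically on a graph G with ramification number R = 2. Then exactly one of the following holds: (i) there is a single branch point y with (r_y, w_y) = (2, 1) or (r_y, w_y) = (1, 2); or (ii) there are exactly two branch points y₁, y₂, and up to reordering the vector (r₁, r₂; w₁, w₂) equals (2, 2; 0, 0), (1, 1; 1, 1), or (1, 2; 1, 0). -/

import Mathlib

open scoped Classical

/-- A finite connected multigraph without loop edges. -/
structure Multigraph where
  V : Type
  E : Type
  [fintypeV : Fintype V]
  [fintypeE : Fintype E]
  ends : E → Sym2 V
  loopless : ∀ e : E, ¬ (ends e).IsDiag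
  connected : (SimpleGraph.fromRel fun x y : V => ∃ e : E, ends e = s(x, y)).Connected

attribute [instance] Multigraph.fintypeV Multigraph.fintypeE

namespace Multigraph

/-- The genus (first Betti number, cyclomatic number) of a multigraph. -/
def genus (G : Multigraph) : ℤ :=
  (Fintype.card G.E : ℤ) - (Fintype.card G.V : ℤ) + 1

/-- A cycle in a multigraph, given as a nonempty set of edges such that every vertex is
incident to either 0 or 2 of its edges. -/
def IsCycleSet (G : Multigraph) (C : Set G.E) : Prop :=
  C.Nonempty ∧ ∀ x : G.V,
    Nat.card {e : G.E // e ∈ C ∧ x ∈ G.ends e} = 0 ∨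
    Nat.card {e : G.E // e ∈ C ∧ x ∈ G.ends e} = 2

end Multigraph

/-- A morphism of multigraphs: vertices go to vertices, and each edge goes either to an
edge joining the images of its endpoints, or to the common image of its endpoints
(in which case the edge is *vertical*). -/
structure Morphism (G G' : Multigraph) where
  vmap : G.V → G'.V
  emap : G.E → G'.E ⊕ G'.V
  compat : ∀ e : G.E,
    (∀ e', emap e = Sum.inl e' → G'.ends e' = (G.ends e).map vmap) ∧
    (∀ v, emap e = Sum.inr v → (G.ends e).map vmap = Sym2.diag v)

namespace Morphism

/-- A morphism is harmonic if for every vertex `x`, the number of edges incident to `x`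
mapping to a given edge `e'` incident to `φ(x)` is independent of the choice of `e'`. -/
def Harmonic {G G' : Multigraph} (φ : Morphism G G') : Prop :=
  ∀ (x : G.V) (e₁ e₂ : G'.E), φ.vmap x ∈ G'.ends e₁ → φ.vmap x ∈ G'.ends e₂ →
    Nat.card {e : G.E // x ∈ G.ends e ∧ φ.emap e = Sum.inl e₁} =
    Nat.card {e : G.E // x ∈ G.ends e ∧ φ.emap e = Sum.inl e₂}

/-- A morphism is nonconstant if its image is not a single vertex. -/
def Nonconstant {G G' : Multigraph} (φ : Morphism G G') : Prop :=
  ∃ x y : G.V, φ.vmap x ≠ φ.vmap y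

/-- Composition of morphisms of multigraphs. -/
def comp {G₁ G₂ G₃ : Multigraph} (ψ : Morphism G₂ G₃) (φ : Morphism G₁ G₂) :
    Morphism G₁ G₃ where
  vmap := ψ.vmap ∘ φ.vmap
  emap e := Sum.elim ψ.emap (fun v => Sum.inr (ψ.vmap v)) (φ.emap e)
  compat e := by
    constructor
    · intro e'' h
      rcases hφ : φ.emap e with e' | v
      · simp only [hφ, Sum.elim_inl] at h
        have h1 := (φ.compat e).1 e' hφ
        have h2 := (ψ.compat e').1 e'' h
        rw [h2, h1, Sym2.map_map]
      · simp only [hφ, Sum.elim_inr] at h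
        simp at h
    · intro v h
      rcases hφ : φ.emap e with e' | v₀
      · simp only [hφ, Sum.elim_inl] at h
        have h1 := (φ.compat e).1 e' hφ
        have h2 := (ψ.compat e').2 v h
        rw [← Sym2.map_map, ← h1]
        exact h2
      · simp only [hφ, Sum.elim_inr, Sum.inr.injEq] at h
        have h1 := (φ.compat e).2 v₀ hφ
        subst h
        rw [← Sym2.map_map, h1]
        rfl
end Morphism

/-- A group of automorphisms of a multigraph `G` (a faithful action of `Γ` on `G` by
automorphisms, i.e. a subgroup of `Aut(G)`). -/
structure GraphAction (Γ : Type) [Group Γ] (G : Multigraph) where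
  actV : Γ →* Equiv.Perm G.V
  actE : Γ →* Equiv.Perm G.E
  ends_map : ∀ (γ : Γ) (e : G.E), G.ends (actE γ e) = (G.ends e).map (actV γ)
  faithful : ∀ γ : Γ, (∀ x : G.V, actV γ x = x) → (∀ e : G.E, actE γ e = e) → γ = 1

namespace GraphAction

variable {Γ : Type} [Group Γ] {G : Multigraph}

/-- Two vertices lie in the same `Δ`-orbit. -/
def vrel (A : GraphAction Γ G) (Δ : Subgroup Γ) (x y : G.V) : Prop :=
  ∃ δ ∈ Δ, A.actV δ x = y

/-- Two edges lie in the same `Δ`-orbit. -/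
def erel (A : GraphAction Γ G) (Δ : Subgroup Γ) (e f : G.E) : Prop :=
  ∃ δ ∈ Δ, A.actE δ e = f

/-- The setoid of `Δ`-orbits of vertices. -/
def vSetoid (A : GraphAction Γ G) (Δ : Subgroup Γ) : Setoid G.V where
  r := A.vrel Δ
  iseqv := by
    constructor
    · intro x; exact ⟨1, Δ.one_mem, by simp⟩
    · rintro x y ⟨δ, hδ, h⟩
      refine ⟨δ⁻¹, Δ.inv_mem hδ, ?_⟩
      rw [map_inv, ← h]
      exact Equiv.symm_apply_apply _ _
    · rintro x y z ⟨δ₁, h1, e1⟩ ⟨δ₂, h2, e2⟩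
      refine ⟨δ₂ * δ₁, Δ.mul_mem h2 h1, ?_⟩
      rw [map_mul]
      simp [Equiv.Perm.mul_apply, e1, e2]

/-- The setoid of `Δ`-orbits of edges. -/
def eSetoid (A : GraphAction Γ G) (Δ : Subgroup Γ) : Setoid G.E where
  r := A.erel Δ
  iseqv := by
    constructor
    · intro e; exact ⟨1, Δ.one_mem, by simp⟩
    · rintro e f ⟨δ, hδ, h⟩
      refine ⟨δ⁻¹, Δ.inv_mem hδ, ?_⟩
      rw [map_inv, ← h]
      exact Equiv.symm_apply_apply _ _
    · rintro e f k ⟨δ₁, h1, e1⟩ ⟨δ₂, h2, e2⟩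
      refine ⟨δ₂ * δ₁, Δ.mul_mem h2 h1, ?_⟩
      rw [map_mul]
      simp [Equiv.Perm.mul_apply, e1, e2]

/-- An edge is `Δ`-vertical if its two endpoints lie in the same `Δ`-orbit (so it is
contracted by the quotient morphism `G → G/Δ`). -/
def Vertical (A : GraphAction Γ G) (Δ : Subgroup Γ) (e : G.E) : Prop :=
  ∃ x y : G.V, G.ends e = s(x, y) ∧ A.vrel Δ x y

/-- The vertex set of the quotient graph `G/Δ`: the `Δ`-orbits of vertices. -/
abbrev quotV (A : GraphAction Γ G) (Δ : Subgroup Γ) : Type :=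
  Quotient (A.vSetoid Δ)

/-- The edge set of the quotient graph `G/Δ`: the `Δ`-orbits of non-vertical edges. -/
abbrev quotE (A : GraphAction Γ G) (Δ : Subgroup Γ) : Type :=
  Quotient ((A.eSetoid Δ).comap (Subtype.val : {e : G.E // ¬ A.Vertical Δ e} → G.E))

/-- The genus of the quotient graph `G/Δ`. -/
noncomputable def quotGenus (A : GraphAction Γ G) (Δ : Subgroup Γ) : ℤ :=
  (Nat.card (A.quotE Δ) : ℤ) - (Nat.card (A.quotV Δ) : ℤ) + 1

/-- The order of the stabilizer `Δ_x` of a vertex `x`. -/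
noncomputable def stabOrder (A : GraphAction Γ G) (Δ : Subgroup Γ) (x : G.V) : ℕ :=
  Nat.card {γ : Γ // γ ∈ Δ ∧ A.actV γ x = x}

/-- The vertical multiplicity of a vertex `x`: the number of `Δ`-vertical edges
incident to `x`. -/
noncomputable def vertMult (A : GraphAction Γ G) (Δ : Subgroup Γ) (x : G.V) : ℕ :=
  Nat.card {e : G.E // x ∈ G.ends e ∧ A.Vertical Δ e}

/-- `r_y = |Δ_x|` for a vertex `y` of the quotient `G/Δ` and any `x` in the fiber over `y`. -/
noncomputable def r (A : GraphAction Γ G) (Δ : Subgroup Γ) (y : A.quotV Δ) : ℕ :=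
  A.stabOrder Δ (Quotient.out y)

/-- `w_y = v(x)/|Δ_x|` for a vertex `y` of the quotient `G/Δ` and any `x` in the fiber. -/
noncomputable def w (A : GraphAction Γ G) (Δ : Subgroup Γ) (y : A.quotV Δ) : ℕ :=
  A.vertMult Δ (Quotient.out y) / A.r Δ y

/-- The ramification number `R = Σ_y [2(1 - 1/r_y) + w_y]` of the quotient map `G → G/Δ`. -/
noncomputable def ram (A : GraphAction Γ G) (Δ : Subgroup Γ) : ℚ :=
  ∑ᶠ y : A.quotV Δ, (2 * (1 - 1 / (A.r Δ y : ℚ)) + (A.w Δ y : ℚ))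

/-- A vertex `y` of the quotient `G/Δ` is a branch point if `2(1 - 1/r_y) + w_y > 0`. -/
def IsBranch (A : GraphAction Γ G) (Δ : Subgroup Γ) (y : A.quotV Δ) : Prop :=
  0 < 2 * (1 - 1 / (A.r Δ y : ℚ)) + (A.w Δ y : ℚ)

/-- The quotient morphism `φ_Δ : G → G/Δ` is harmonic: for every vertex `x` of `G` and
every pair of quotient edges incident to the image of `x`, the numbers of preimages
incident to `x` agree. -/
def QuotHarmonic (A : GraphAction Γ G) (Δ : Subgroup Γ) : Prop :=
  ∀ (x : G.V) (e₁ e₂ : G.E), ¬ A.Vertical Δ e₁ → ¬ A.Vertical Δ e₂ →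
    (∃ v ∈ G.ends e₁, A.vrel Δ x v) → (∃ v ∈ G.ends e₂, A.vrel Δ x v) →
    Nat.card {e : G.E // x ∈ G.ends e ∧ A.erel Δ e e₁} =
    Nat.card {e : G.E // x ∈ G.ends e ∧ A.erel Δ e e₂}

/-- The quotient morphism `φ_Δ : G → G/Δ` is non-degenerate: no neighborhood `x(1)` is
contracted to a vertex, i.e. every vertex has a neighbor outside its `Δ`-orbit. -/
def QuotNondeg (A : GraphAction Γ G) (Δ : Subgroup Γ) : Prop :=
  ∀ x : G.V, ∃ e : G.E, x ∈ G.ends e ∧ ∃ y ∈ G.ends e, ¬ A.vrel Δ x y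

/-- `Γ` acts harmonically on `G` if for every subgroup `Δ ≤ Γ` the quotient morphism
`φ_Δ : G → G/Δ` is harmonic and non-degenerate. -/
def ActsHarmonically (A : GraphAction Γ G) : Prop :=
  ∀ Δ : Subgroup Γ, A.QuotHarmonic Δ ∧ A.QuotNondeg Δ

/-- The quotient map `G → G/Δ` is horizontally unramified: all vertex stabilizers in `Δ`
are trivial. -/
def HorizUnramified (A : GraphAction Γ G) (Δ : Subgroup Γ) : Prop :=
  ∀ (x : G.V) (γ : Γ), γ ∈ Δ → A.actV γ x = x → γ = 1

end GraphAction

/-- `M g` is the maximal order of a group acting harmonically on a graph of genus `g`. -/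
noncomputable def M (g : ℕ) : ℕ :=
  sSup {n : ℕ | ∃ (Γ : Type) (i : Group Γ) (G : Multigraph) (A : @GraphAction Γ i G),
    @GraphAction.ActsHarmonically Γ i G A ∧ G.genus = (g : ℤ) ∧ Nat.card Γ = n}

lemma aux_eq_two_case (r w : ℕ) (hr : 1 ≤ r)
    (h : 2 * (1 - 1 / (r : ℚ)) + (w : ℚ) = 2) :
    (r = 2 ∧ w = 1) ∨ (r = 1 ∧ w = 2) := by
  have hr0 : (r : ℚ) ≠ 0 := by positivity
  have h2 : (w : ℚ) * r = 2 := by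
    field_simp at h
    linarith
  have h3 : w * r = 2 := by exact_mod_cast h2
  have hd : r ≤ 2 := Nat.le_of_dvd two_pos ⟨w, by rw [Nat.mul_comm]; exact h3.symm⟩
  interval_cases r <;> omega

lemma aux_eq_one_case (r w : ℕ) (hr : 1 ≤ r)
    (h : 2 * (1 - 1 / (r : ℚ)) + (w : ℚ) = 1) :
    (r = 1 ∧ w = 1) ∨ (r = 2 ∧ w = 0) := by
  have hr0 : (r : ℚ) ≠ 0 := by positivity
  have h2 : ((w + 1 : ℕ) : ℚ) * r = 2 := by
    push_cast
    field_simp at h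
    linarith
  have h3 : (w + 1) * r = 2 := by exact_mod_cast h2
  have hd : r ≤ 2 := Nat.le_of_dvd two_pos ⟨w + 1, by rw [Nat.mul_comm]; exact h3.symm⟩
  interval_cases r <;> omega

lemma aux_one_le (r w : ℕ) (hr : 1 ≤ r)
    (h : 0 < 2 * (1 - 1 / (r : ℚ)) + (w : ℚ)) :
    1 ≤ 2 * (1 - 1 / (r : ℚ)) + (w : ℚ) := by
  rcases eq_or_lt_of_le hr with h1 | h2
  · have : (r : ℚ) = 1 := by exact_mod_cast h1.symm
    rw [this] at h ⊢
    simp only [div_one, sub_self, mul_zero, zero_add] at h ⊢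
    have hw : 0 < w := by exact_mod_cast h
    exact_mod_cast hw
  · have hr2 : (2 : ℚ) ≤ r := by exact_mod_cast h2
    have hinv : 1 / (r : ℚ) ≤ 1 / 2 := by
      apply one_div_le_one_div_of_le <;> linarith
    have hw : (0 : ℚ) ≤ w := Nat.cast_nonneg w
    linarith

lemma aux_nonneg (r w : ℕ) (hr : 1 ≤ r) :
    0 ≤ 2 * (1 - 1 / (r : ℚ)) + (w : ℚ) := by
  have hr1 : (1 : ℚ) ≤ r := by exact_mod_cast hr
  have hinv : 1 / (r : ℚ) ≤ 1 := by
    rw [div_le_one (by linarith)]; linarith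
  have hw : (0 : ℚ) ≤ w := Nat.cast_nonneg w
  linarith

/-- If `Γ` acts harmonically on `G` with `R = 2`, then exactly one of:
(i) a single branch point with `(r, w) = (2, 1)` or `(1, 2)`; (ii) two branch points with
vector `(r₁, r₂; w₁, w₂)` equal (up to reordering) to `(2,2;0,0)`, `(1,1;1,1)` or
`(1,2;1,0)`. -/
theorem branch_of_ram_eq_two {Γ : Type} [Group Γ] {G : Multigraph} (A : GraphAction Γ G)
    (hA : A.ActsHarmonically) (hR : A.ram ⊤ = 2) :
    ((∃! y : A.quotV ⊤, A.IsBranch ⊤ y) ∧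
      ∀ y : A.quotV ⊤, A.IsBranch ⊤ y →
        (A.r ⊤ y = 2 ∧ A.w ⊤ y = 1) ∨ (A.r ⊤ y = 1 ∧ A.w ⊤ y = 2)) ∨
    (∃ y₁ y₂ : A.quotV ⊤, y₁ ≠ y₂ ∧ A.IsBranch ⊤ y₁ ∧ A.IsBranch ⊤ y₂ ∧
      (∀ y : A.quotV ⊤, A.IsBranch ⊤ y → y = y₁ ∨ y = y₂) ∧
      ((A.r ⊤ y₁ = 2 ∧ A.r ⊤ y₂ = 2 ∧ A.w ⊤ y₁ = 0 ∧ A.w ⊤ y₂ = 0) ∨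
       (A.r ⊤ y₁ = 1 ∧ A.r ⊤ y₂ = 1 ∧ A.w ⊤ y₁ = 1 ∧ A.w ⊤ y₂ = 1) ∨
       (A.r ⊤ y₁ = 1 ∧ A.r ⊤ y₂ = 2 ∧ A.w ⊤ y₁ = 1 ∧ A.w ⊤ y₂ = 0))) := by
  classical
  -- Γ is finite since the action is faithful on a finite graph
  have hinj : Function.Injective (A.actV.prod A.actE) := by
    rw [injective_iff_map_eq_one]
    intro γ hγ
    have h1 : A.actV γ = 1 := congrArg Prod.fst hγ
    have h2 : A.actE γ = 1 := congrArg Prod.snd hγ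
    exact A.faithful γ (fun x => by rw [h1]; rfl) (fun e => by rw [h2]; rfl)
  have hΓfin : Finite Γ := Finite.of_injective _ hinj
  -- `r y ≥ 1` for all y
  have hr1 : ∀ y : A.quotV ⊤, 1 ≤ A.r ⊤ y := by
    intro y
    have hne : Nonempty {γ : Γ // γ ∈ (⊤ : Subgroup Γ) ∧
        A.actV γ (Quotient.out y) = Quotient.out y} :=
      ⟨⟨1, Subgroup.mem_top 1, by simp⟩⟩
    exact Nat.one_le_iff_ne_zero.2 (Nat.card_pos (α := _)).ne'
  -- abbreviate the summand
  set t : A.quotV ⊤ → ℚ := fun y => 2 * (1 - 1 / (A.r ⊤ y : ℚ)) + (A.w ⊤ y : ℚ) with ht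
  haveI : Finite (A.quotV ⊤) := Quotient.finite _
  haveI : Fintype (A.quotV ⊤) := Fintype.ofFinite _
  have hsum : ∑ y : A.quotV ⊤, t y = 2 := by
    rw [← finsum_eq_sum_of_fintype]
    exact hR
  have htnn : ∀ y : A.quotV ⊤, 0 ≤ t y := fun y => aux_nonneg _ _ (hr1 y)
  have hbr : ∀ y : A.quotV ⊤, A.IsBranch ⊤ y ↔ 0 < t y := fun y => Iff.rfl
  set B : Finset (A.quotV ⊤) := Finset.univ.filter (fun y => A.IsBranch ⊤ y) with hBdef
  have hmemB : ∀ y : A.quotV ⊤, y ∈ B ↔ A.IsBranch ⊤ y := by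
    intro y; simp [hBdef]
  have hsumB : ∑ y ∈ B, t y = 2 := by
    rw [hBdef, Finset.sum_filter_of_ne, hsum]
    intro y _ hy
    exact (hbr y).2 (lt_of_le_of_ne (htnn y) (Ne.symm hy))
  have hone : ∀ y ∈ B, (1 : ℚ) ≤ t y := by
    intro y hy
    exact aux_one_le _ _ (hr1 y) ((hbr y).1 ((hmemB y).1 hy))
  have hcard : (B.card : ℚ) ≤ 2 := by
    calc (B.card : ℚ) = ∑ _y ∈ B, (1 : ℚ) := by simp
    _ ≤ ∑ y ∈ B, t y := Finset.sum_le_sum hone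
    _ = 2 := hsumB
  have hcard2 : B.card ≤ 2 := by exact_mod_cast hcard
  have hBne : B.Nonempty := by
    by_contra h
    rw [Finset.not_nonempty_iff_eq_empty] at h
    rw [h, Finset.sum_empty] at hsumB
    norm_num at hsumB
  have hcard1 : 1 ≤ B.card := Finset.card_pos.2 hBne
  interval_cases h : B.card
  · -- one branch point
    obtain ⟨y, hy⟩ := Finset.card_eq_one.1 h
    have hyB : A.IsBranch ⊤ y := (hmemB y).1 (hy ▸ Finset.mem_singleton_self y)
    have hty : t y = 2 := by rw [hy, Finset.sum_singleton] at hsumB; exact hsumB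
    have huniq : ∀ z : A.quotV ⊤, A.IsBranch ⊤ z → z = y := by
      intro z hz
      have : z ∈ B := (hmemB z).2 hz
      rw [hy, Finset.mem_singleton] at this
      exact this
    left
    refine ⟨⟨y, hyB, huniq⟩, ?_⟩
    intro z hz
    rw [huniq z hz]
    exact aux_eq_two_case _ _ (hr1 y) hty
  · -- two branch points
    obtain ⟨a, b, hab, hBeq⟩ := Finset.card_eq_two.1 h
    have haB : A.IsBranch ⊤ a := (hmemB a).1 (hBeq ▸ Finset.mem_insert_self a {b})
    have hbB : A.IsBranch ⊤ b := (hmemB b).1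
      (hBeq ▸ Finset.mem_insert_of_mem (Finset.mem_singleton_self b))
    have hsum2 : t a + t b = 2 := by
      rw [hBeq, Finset.sum_pair hab] at hsumB; exact hsumB
    have h1a : (1 : ℚ) ≤ t a := hone a ((hmemB a).2 haB)
    have h1b : (1 : ℚ) ≤ t b := hone b ((hmemB b).2 hbB)
    have hta : t a = 1 := by linarith
    have htb : t b = 1 := by linarith
    have hca := aux_eq_one_case _ _ (hr1 a) hta
    have hcb := aux_eq_one_case _ _ (hr1 b) htb
    have huniq : ∀ z : A.quotV ⊤, A.IsBranch ⊤ z → z = a ∨ z = b := by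
      intro z hz
      have : z ∈ B := (hmemB z).2 hz
      rw [hBeq, Finset.mem_insert, Finset.mem_singleton] at this
      exact this
    right
    rcases hca with ⟨hra, hwa⟩ | ⟨hra, hwa⟩ <;> rcases hcb with ⟨hrb, hwb⟩ | ⟨hrb, hwb⟩
    · exact ⟨a, b, hab, haB, hbB, huniq, Or.inr (Or.inl ⟨hra, hrb, hwa, hwb⟩)⟩
    · exact ⟨a, b, hab, haB, hbB, huniq, Or.inr (Or.inr ⟨hra, hrb, hwa, hwb⟩)⟩
    · exact ⟨b, a, hab.symm, hbB, haB, fun z hz => (huniq z hz).symm,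
        Or.inr (Or.inr ⟨hrb, hra, hwb, hwa⟩)⟩
    · exact ⟨a, b, hab, haB, hbB, huniq, Or.inl ⟨hra, hrb, hwa, hwb⟩⟩
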